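/- Let L be a Lie algebra over ℚ and let P = { f : ℕ → L : f(0) = 0 }. Define [f, g]_b on P by [f, g]_b(2n) = Σ_{r=0}^{n} C(n, r) ⁅f(2r), g(2(n−r))⁆ and [f, g]_b(2n+1) = Σ_{r=0}^{n} C(n, r)( ⁅f(2r+1), g(2(n−r))⁆ + ⁅f(2r), g(2(n−r)+1)⁆ ), and define [f, g]_c(q) = Σ_{r+s=q, r and s not both odd} ⁅f(r), g(s)⁆. Then both [ , ]_b and [ , ]_c are Lie brackets on P, and the linear map Φ : P → P given by Φ(f)(2n) = (1/n!) f(2n) and Φ(f)(2n+1) = (1/n!) f(2n+1) is an isomorphism of Lie algebras from (P, [ , ]_b) to (P, [ , ]_c) preserving the filtration F_r = { f ∈ P : f(i) = 0 for all i < r }. -/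

import Mathlib

set_option maxHeartbeats 1000000


set_option autoImplicit false

/-- The space `P = { f : ℕ → L | f 0 = 0 }`. -/
noncomputable def Pseq (L : Type) [LieRing L] [LieAlgebra ℚ L] : Submodule ℚ (ℕ → L) :=
  LinearMap.ker (LinearMap.proj (R := ℚ) (φ := fun _ : ℕ => L) 0)

theorem mem_Pseq {L : Type} [LieRing L] [LieAlgebra ℚ L] {f : ℕ → L} :
    f ∈ Pseq L ↔ f 0 = 0 := by
  simp [Pseq]

/-- The "even/odd binomial" bracket:
`[f, g]_b(2n) = Σ_{r=0}^{n} C(n, r) ⁅f(2r), g(2(n−r))⁆` and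
`[f, g]_b(2n+1) = Σ_{r=0}^{n} C(n, r)(⁅f(2r+1), g(2(n−r))⁆ + ⁅f(2r), g(2(n−r)+1)⁆)`,
written with `n = q/2` and natural subtraction. -/
noncomputable def brBE {L : Type} [LieRing L] [LieAlgebra ℚ L] (f g : Pseq L) : Pseq L :=
  ⟨fun q =>
    if q % 2 = 0 then
      ∑ r ∈ Finset.range (q / 2 + 1),
        ((q / 2).choose r : ℚ) • ⁅(f : ℕ → L) (2 * r), (g : ℕ → L) (q - 2 * r)⁆
    else
      ∑ r ∈ Finset.range (q / 2 + 1),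
        ((q / 2).choose r : ℚ) •
          (⁅(f : ℕ → L) (2 * r + 1), (g : ℕ → L) (q - (2 * r + 1))⁆ +
            ⁅(f : ℕ → L) (2 * r), (g : ℕ → L) (q - 2 * r)⁆), by
    have hf : (f : ℕ → L) 0 = 0 := mem_Pseq.mp f.2
    simp [mem_Pseq, hf]⟩

/-- The bracket `[f, g]_c(q) = Σ_{r+s=q, r and s not both odd} ⁅f(r), g(s)⁆`. -/
noncomputable def brCE {L : Type} [LieRing L] [LieAlgebra ℚ L] (f g : Pseq L) : Pseq L :=
  ⟨fun q => ∑ r ∈ Finset.range (q + 1),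
      if Odd r ∧ Odd (q - r) then 0 else ⁅(f : ℕ → L) r, (g : ℕ → L) (q - r)⁆, by
    have hf : (f : ℕ → L) 0 = 0 := mem_Pseq.mp f.2
    simp [mem_Pseq, hf]⟩

/-- The rescaling map `Φ(f)(2n) = (1/n!) f(2n)`, `Φ(f)(2n+1) = (1/n!) f(2n+1)`,
i.e. `Φ(f)(q) = (1/(q/2)!) f(q)`. -/
noncomputable def PhiE {L : Type} [LieRing L] [LieAlgebra ℚ L] (f : Pseq L) : Pseq L :=
  ⟨fun q => (((q / 2).factorial : ℚ))⁻¹ • (f : ℕ → L) q, by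
    have hf : (f : ℕ → L) 0 = 0 := mem_Pseq.mp f.2
    simp [mem_Pseq, hf]⟩

/-- `B` is a Lie bracket making the `ℚ`-vector space `M` a Lie algebra over `ℚ`. -/
structure IsLieBracketQ (M : Type) [AddCommGroup M] [Module ℚ M] (B : M → M → M) : Prop where
  add_left : ∀ x y z, B (x + y) z = B x z + B y z
  smul_left : ∀ (c : ℚ) (x y), B (c • x) y = c • B x y
  add_right : ∀ x y z, B x (y + z) = B x y + B x z
  smul_right : ∀ (c : ℚ) (x y), B x (c • y) = c • B x y
  alternating : ∀ x, B x x = 0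
  leibniz : ∀ x y z, B x (B y z) = B (B x y) z + B y (B x z)

namespace Stmt10Aux

noncomputable def indc (q r : ℕ) : ℚ := if Odd r ∧ Odd (q - r) then 0 else 1

lemma lie_sum' {L : Type} [LieRing L] (x : L) (s : Finset ℕ) (f : ℕ → L) :
    ⁅x, ∑ i ∈ s, f i⁆ = ∑ i ∈ s, ⁅x, f i⁆ := by
  induction s using Finset.cons_induction with
  | empty => simp
  | cons a s ha ih => rw [Finset.sum_cons, Finset.sum_cons, lie_add, ih]

lemma sum_lie' {L : Type} [LieRing L] (x : L) (s : Finset ℕ) (f : ℕ → L) :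
    ⁅∑ i ∈ s, f i, x⁆ = ∑ i ∈ s, ⁅f i, x⁆ := by
  induction s using Finset.cons_induction with
  | empty => simp
  | cons a s ha ih => rw [Finset.sum_cons, Finset.sum_cons, add_lie, ih]

variable {L : Type} [LieRing L] [LieAlgebra ℚ L]

lemma brCE_coe (f g : Pseq L) (q : ℕ) :
    ((brCE f g : Pseq L) : ℕ → L) q
      = ∑ r ∈ Finset.range (q + 1), indc q r • ⁅(f : ℕ → L) r, (g : ℕ → L) (q - r)⁆ := by
  show (∑ r ∈ Finset.range (q + 1),
      if Odd r ∧ Odd (q - r) then (0 : L) else ⁅(f : ℕ → L) r, (g : ℕ → L) (q - r)⁆) = _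
  refine Finset.sum_congr rfl fun r _ => ?_
  unfold indc
  split_ifs <;> simp

lemma phiE_coe (f : Pseq L) (q : ℕ) :
    ((PhiE f : Pseq L) : ℕ → L) q = (((q / 2).factorial : ℚ))⁻¹ • (f : ℕ → L) q := rfl

lemma sum_range_guard {M : Type} [AddCommMonoid M] {a q : ℕ} (ha : a ≤ q) (t : ℕ → M) :
    ∑ b ∈ Finset.range (q - a + 1), t b
      = ∑ b ∈ Finset.range (q + 1), if a + b ≤ q then t b else 0 := by
  rw [← Finset.sum_filter]
  apply Finset.sum_congr _ (fun _ _ => rfl)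
  ext b
  simp only [Finset.mem_filter, Finset.mem_range]
  omega

lemma sum_range_guard' {M : Type} [AddCommMonoid M] {r q : ℕ} (hr : r ≤ q) (t : ℕ → M) :
    ∑ a ∈ Finset.range (r + 1), t a
      = ∑ a ∈ Finset.range (q + 1), if a ≤ r then t a else 0 := by
  rw [← Finset.sum_filter]
  apply Finset.sum_congr _ (fun _ _ => rfl)
  ext a
  simp only [Finset.mem_filter, Finset.mem_range]
  omega

lemma reindex_rect {M : Type} [AddCommMonoid M] (q : ℕ) (F : ℕ → ℕ → M) :
    ∑ a ∈ Finset.range (q + 1), ∑ b ∈ Finset.range (q - a + 1), F a b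
      = ∑ a ∈ Finset.range (q + 1), ∑ b ∈ Finset.range (q + 1),
          if a + b ≤ q then F a b else 0 := by
  refine Finset.sum_congr rfl fun a ha => ?_
  exact sum_range_guard (by simpa using Nat.lt_succ_iff.mp (Finset.mem_range.mp ha)) _

lemma reindex_tri {M : Type} [AddCommMonoid M] (q : ℕ) (F : ℕ → ℕ → M) :
    ∑ r ∈ Finset.range (q + 1), ∑ a ∈ Finset.range (r + 1), F r a
      = ∑ a ∈ Finset.range (q + 1), ∑ b ∈ Finset.range (q + 1),
          if a + b ≤ q then F (a + b) a else 0 := by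
  rw [Finset.sum_congr rfl (fun r hr =>
    sum_range_guard' (q := q) (Nat.lt_succ_iff.mp (Finset.mem_range.mp hr)) (fun a => F r a)),
    Finset.sum_comm]
  refine Finset.sum_congr rfl fun a ha => ?_
  have haq : a ≤ q := Nat.lt_succ_iff.mp (Finset.mem_range.mp ha)
  rw [← Finset.sum_filter]
  have hfil : (Finset.range (q + 1)).filter (fun r => a ≤ r) = Finset.Ico a (q + 1) := by
    ext r
    simp only [Finset.mem_filter, Finset.mem_range, Finset.mem_Ico]
    omega
  rw [hfil, Finset.sum_Ico_eq_sum_range, show q + 1 - a = q - a + 1 by omega,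
    sum_range_guard haq]

lemma ind_mul (A B : Prop) [Decidable A] [Decidable B] :
    (if A then (0 : ℚ) else 1) * (if B then 0 else 1) = if A ∨ B then 0 else 1 := by
  by_cases hA : A <;> by_cases hB : B <;> simp [hA, hB]

lemma indc_mul_left {q a b : ℕ} (h : a + b ≤ q) :
    indc q (a + b) * indc (a + b) a = indc q a * indc (q - a) b := by
  unfold indc
  rw [ind_mul, ind_mul]
  refine if_congr ?_ rfl rfl
  simp only [Nat.odd_iff]
  omega

lemma indc_mul_right {q a b : ℕ} (h : a + b ≤ q) :
    indc q b * indc (q - b) a = indc q a * indc (q - a) b := by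
  unfold indc
  rw [ind_mul, ind_mul]
  refine if_congr ?_ rfl rfl
  simp only [Nat.odd_iff]
  omega

end Stmt10Aux


namespace Stmt10Aux

variable {L : Type} [LieRing L] [LieAlgebra ℚ L]

lemma pseq_ext {f g : Pseq L} (h : ∀ q, (f : ℕ → L) q = (g : ℕ → L) q) : f = g :=
  Subtype.ext (funext h)

lemma coe_add (f g : Pseq L) (q : ℕ) :
    ((f + g : Pseq L) : ℕ → L) q = (f : ℕ → L) q + (g : ℕ → L) q := rfl

lemma coe_smul (c : ℚ) (f : Pseq L) (q : ℕ) :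
    ((c • f : Pseq L) : ℕ → L) q = c • (f : ℕ → L) q := rfl

lemma coe_zero (q : ℕ) : ((0 : Pseq L) : ℕ → L) q = 0 := rfl

lemma brCE_add_left (x y z : Pseq L) : brCE (x + y) z = brCE x z + brCE y z := by
  refine pseq_ext fun q => ?_
  rw [coe_add, brCE_coe, brCE_coe, brCE_coe, ← Finset.sum_add_distrib]
  refine Finset.sum_congr rfl fun r _ => ?_
  rw [coe_add, add_lie, smul_add]

lemma brCE_smul_left (c : ℚ) (x y : Pseq L) : brCE (c • x) y = c • brCE x y := by
  refine pseq_ext fun q => ?_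
  rw [coe_smul, brCE_coe, brCE_coe, Finset.smul_sum]
  refine Finset.sum_congr rfl fun r _ => ?_
  rw [coe_smul, smul_lie, smul_comm]

lemma brCE_add_right (x y z : Pseq L) : brCE x (y + z) = brCE x y + brCE x z := by
  refine pseq_ext fun q => ?_
  rw [coe_add, brCE_coe, brCE_coe, brCE_coe, ← Finset.sum_add_distrib]
  refine Finset.sum_congr rfl fun r _ => ?_
  rw [coe_add, lie_add, smul_add]

lemma brCE_smul_right (c : ℚ) (x y : Pseq L) : brCE x (c • y) = c • brCE x y := by
  refine pseq_ext fun q => ?_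
  rw [coe_smul, brCE_coe, brCE_coe, Finset.smul_sum]
  refine Finset.sum_congr rfl fun r _ => ?_
  rw [coe_smul, lie_smul, smul_comm]

lemma indc_symm {q r : ℕ} (hr : r ≤ q) : indc q (q - r) = indc q r := by
  unfold indc
  refine if_congr ?_ rfl rfl
  rw [Nat.sub_sub_self hr, and_comm]

lemma brCE_alternating (x : Pseq L) : brCE x x = 0 := by
  refine pseq_ext fun q => ?_
  rw [brCE_coe, coe_zero]
  refine Finset.sum_involution (fun r _ => q - r) ?_ ?_ ?_ ?_
  · intro r hr
    have hrq : r ≤ q := Nat.lt_succ_iff.mp (Finset.mem_range.mp hr)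
    show indc q r • ⁅(x : ℕ → L) r, (x : ℕ → L) (q - r)⁆
        + indc q (q - r) • ⁅(x : ℕ → L) (q - r), (x : ℕ → L) (q - (q - r))⁆ = 0
    rw [indc_symm hrq, Nat.sub_sub_self hrq, ← smul_add]
    have hz : ⁅(x : ℕ → L) r, (x : ℕ → L) (q - r)⁆ + ⁅(x : ℕ → L) (q - r), (x : ℕ → L) r⁆ = 0 := by
      rw [← lie_skew ((x : ℕ → L) (q - r)) ((x : ℕ → L) r), add_neg_cancel]
    rw [hz, smul_zero]
  · intro r hr hne heq
    have heq' : q - r = r := heq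
    apply hne
    show indc q r • ⁅(x : ℕ → L) r, (x : ℕ → L) (q - r)⁆ = 0
    rw [heq', lie_self, smul_zero]
  · intro r hr
    simp only [Finset.mem_range] at hr ⊢
    omega
  · intro r hr
    have hrq : r ≤ q := Nat.lt_succ_iff.mp (Finset.mem_range.mp hr)
    show q - (q - r) = r
    omega

lemma brCE_leibniz (x y z : Pseq L) :
    brCE x (brCE y z) = brCE (brCE x y) z + brCE y (brCE x z) := by
  refine pseq_ext fun q => ?_
  have hL : ((brCE x (brCE y z) : Pseq L) : ℕ → L) q
      = ∑ a ∈ Finset.range (q + 1), ∑ b ∈ Finset.range (q + 1),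
          if a + b ≤ q then
            (indc q a * indc (q - a) b) • ⁅(x : ℕ → L) a, ⁅(y : ℕ → L) b, (z : ℕ → L) (q - a - b)⁆⁆
          else 0 := by
    rw [brCE_coe, ← reindex_rect]
    refine Finset.sum_congr rfl fun a ha => ?_
    rw [brCE_coe, lie_sum', Finset.smul_sum]
    refine Finset.sum_congr rfl fun b hb => ?_
    rw [lie_smul, smul_smul]
  have hR1 : ((brCE (brCE x y) z : Pseq L) : ℕ → L) q
      = ∑ a ∈ Finset.range (q + 1), ∑ b ∈ Finset.range (q + 1),
          if a + b ≤ q then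
            (indc q a * indc (q - a) b) • ⁅⁅(x : ℕ → L) a, (y : ℕ → L) b⁆, (z : ℕ → L) (q - a - b)⁆
          else 0 := by
    rw [brCE_coe]
    have step : ∀ r ∈ Finset.range (q + 1),
        indc q r • ⁅((brCE x y : Pseq L) : ℕ → L) r, (z : ℕ → L) (q - r)⁆
          = ∑ a ∈ Finset.range (r + 1),
              (indc q r * indc r a) • ⁅⁅(x : ℕ → L) a, (y : ℕ → L) (r - a)⁆, (z : ℕ → L) (q - r)⁆ := by
      intro r _
      rw [brCE_coe, sum_lie', Finset.smul_sum]
      refine Finset.sum_congr rfl fun a _ => ?_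
      rw [smul_lie, smul_smul]
    rw [Finset.sum_congr rfl step, reindex_tri]
    refine Finset.sum_congr rfl fun a ha => Finset.sum_congr rfl fun b hb => ?_
    by_cases hab : a + b ≤ q
    · rw [if_pos hab, if_pos hab, Nat.add_sub_cancel_left, indc_mul_left hab,
        show q - (a + b) = q - a - b by omega]
    · rw [if_neg hab, if_neg hab]
  have hR2 : ((brCE y (brCE x z) : Pseq L) : ℕ → L) q
      = ∑ a ∈ Finset.range (q + 1), ∑ b ∈ Finset.range (q + 1),
          if a + b ≤ q then
            (indc q a * indc (q - a) b) • ⁅(y : ℕ → L) b, ⁅(x : ℕ → L) a, (z : ℕ → L) (q - a - b)⁆⁆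
          else 0 := by
    rw [brCE_coe]
    have step : ∀ b ∈ Finset.range (q + 1),
        indc q b • ⁅(y : ℕ → L) b, ((brCE x z : Pseq L) : ℕ → L) (q - b)⁆
          = ∑ a ∈ Finset.range (q - b + 1),
              (indc q b * indc (q - b) a) • ⁅(y : ℕ → L) b, ⁅(x : ℕ → L) a, (z : ℕ → L) (q - b - a)⁆⁆ := by
      intro b _
      rw [brCE_coe, lie_sum', Finset.smul_sum]
      refine Finset.sum_congr rfl fun a _ => ?_
      rw [lie_smul, smul_smul]
    rw [Finset.sum_congr rfl step, reindex_rect, Finset.sum_comm]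
    refine Finset.sum_congr rfl fun a ha => Finset.sum_congr rfl fun b hb => ?_
    by_cases hab : a + b ≤ q
    · rw [if_pos (by omega : b + a ≤ q), if_pos hab, indc_mul_right hab,
        show q - b - a = q - a - b by omega]
    · rw [if_neg (by omega : ¬ b + a ≤ q), if_neg hab]
  rw [coe_add, hL, hR1, hR2, ← Finset.sum_add_distrib]
  refine Finset.sum_congr rfl fun a _ => ?_
  rw [← Finset.sum_add_distrib]
  refine Finset.sum_congr rfl fun b _ => ?_
  by_cases hab : a + b ≤ q
  · rw [if_pos hab, if_pos hab, if_pos hab, leibniz_lie, smul_add]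
  · rw [if_neg hab, if_neg hab, if_neg hab, add_zero]

end Stmt10Aux


namespace Stmt10Aux

variable {L : Type} [LieRing L] [LieAlgebra ℚ L]

lemma phiE_add (f g : Pseq L) : PhiE (f + g) = PhiE f + PhiE g := by
  refine pseq_ext fun q => ?_
  rw [coe_add, phiE_coe, phiE_coe, phiE_coe, coe_add, smul_add]

lemma phiE_smul (c : ℚ) (f : Pseq L) : PhiE (c • f) = c • PhiE f := by
  refine pseq_ext fun q => ?_
  rw [coe_smul, phiE_coe, phiE_coe, coe_smul, smul_comm]

noncomputable def PsiE (f : Pseq L) : Pseq L :=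
  ⟨fun q => (((q / 2).factorial : ℚ)) • (f : ℕ → L) q, by
    have hf : (f : ℕ → L) 0 = 0 := mem_Pseq.mp f.2
    simp [mem_Pseq, hf]⟩

lemma phiE_leftInv : Function.LeftInverse (PsiE (L := L)) (PhiE (L := L)) := by
  intro f
  refine pseq_ext fun q => ?_
  show (((q / 2).factorial : ℚ)) • ((((q / 2).factorial : ℚ))⁻¹ • (f : ℕ → L) q) = _
  rw [smul_smul, mul_inv_cancel₀ (by exact_mod_cast (q / 2).factorial_ne_zero), one_smul]

lemma phiE_rightInv : Function.RightInverse (PsiE (L := L)) (PhiE (L := L)) := by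
  intro f
  refine pseq_ext fun q => ?_
  show (((q / 2).factorial : ℚ))⁻¹ • ((((q / 2).factorial : ℚ)) • (f : ℕ → L) q) = _
  rw [smul_smul, inv_mul_cancel₀ (by exact_mod_cast (q / 2).factorial_ne_zero), one_smul]

lemma phiE_bij : Function.Bijective (PhiE (L := L)) :=
  ⟨phiE_leftInv.injective, phiE_rightInv.surjective⟩

lemma sum_split {M : Type} [AddCommMonoid M] (n : ℕ) (F : ℕ → M) :
    ∑ r ∈ Finset.range (2 * n + 1), F r
      = ∑ a ∈ Finset.range (n + 1), F (2 * a) + ∑ a ∈ Finset.range n, F (2 * a + 1) := by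
  induction n with
  | zero => simp
  | succ n ih =>
      rw [show 2 * (n + 1) + 1 = (2 * n + 1) + 1 + 1 by ring, Finset.sum_range_succ,
        Finset.sum_range_succ, ih, Finset.sum_range_succ (f := fun a => F (2 * a)) (n := n + 1),
        Finset.sum_range_succ (f := fun a => F (2 * a + 1)) (n := n),
        show 2 * n + 1 + 1 = 2 * (n + 1) by ring]
      abel

lemma sum_split' {M : Type} [AddCommMonoid M] (n : ℕ) (F : ℕ → M) :
    ∑ r ∈ Finset.range (2 * n + 2), F r
      = ∑ a ∈ Finset.range (n + 1), F (2 * a) + ∑ a ∈ Finset.range (n + 1), F (2 * a + 1) := by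
  rw [show 2 * n + 2 = (2 * n + 1) + 1 by ring, Finset.sum_range_succ, sum_split,
    Finset.sum_range_succ (f := fun a => F (2 * a + 1)) (n := n)]
  abel

lemma choose_coeff {n a : ℕ} (ha : a ≤ n) :
    ((n.factorial : ℚ))⁻¹ * (n.choose a : ℚ)
      = (((n - a).factorial : ℚ))⁻¹ * ((a.factorial : ℚ))⁻¹ := by
  rw [Nat.cast_choose ℚ ha]
  have h1 : (n.factorial : ℚ) ≠ 0 := by exact_mod_cast n.factorial_ne_zero
  have h2 : (a.factorial : ℚ) ≠ 0 := by exact_mod_cast a.factorial_ne_zero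
  have h3 : (((n - a).factorial : ℚ)) ≠ 0 := by exact_mod_cast (n - a).factorial_ne_zero
  field_simp

lemma indc_even_left (q a : ℕ) : indc q (2 * a) = 1 := by
  unfold indc
  rw [if_neg]
  rintro ⟨⟨k, hk⟩, -⟩
  omega

lemma indc_odd_odd {q a : ℕ} (h1 : Odd (2 * a + 1)) (h2 : Odd (q - (2 * a + 1))) :
    indc q (2 * a + 1) = 0 := by
  unfold indc
  rw [if_pos ⟨h1, h2⟩]

lemma indc_odd_even {q a : ℕ} (h2 : ¬ Odd (q - (2 * a + 1))) :
    indc q (2 * a + 1) = 1 := by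
  unfold indc
  rw [if_neg]
  rintro ⟨-, h⟩
  exact h2 h

lemma phiE_br (f g : Pseq L) : PhiE (brBE f g) = brCE (PhiE f) (PhiE g) := by
  refine pseq_ext fun q => ?_
  rw [brCE_coe, phiE_coe]
  simp only [phiE_coe]
  rcases Nat.even_or_odd q with h | h
  · rw [Nat.even_iff] at h
    obtain ⟨n, rfl⟩ : ∃ n, q = 2 * n := ⟨q / 2, by omega⟩
    have hmod : 2 * n % 2 = 0 := by omega
    have hdiv : 2 * n / 2 = n := by omega
    have hbr : ((brBE f g : Pseq L) : ℕ → L) (2 * n)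
        = ∑ r ∈ Finset.range (n + 1),
            ((n.choose r : ℚ)) • ⁅(f : ℕ → L) (2 * r), (g : ℕ → L) (2 * n - 2 * r)⁆ := by
      show (if 2 * n % 2 = 0 then _ else _) = _
      rw [if_pos hmod, hdiv]
    rw [hbr, hdiv, Finset.smul_sum, sum_split]
    have hzero : ∑ a ∈ Finset.range n,
        (indc (2 * n) (2 * a + 1)) •
          ⁅(((2 * a + 1) / 2).factorial : ℚ)⁻¹ • (f : ℕ → L) (2 * a + 1),
            (((2 * n - (2 * a + 1)) / 2).factorial : ℚ)⁻¹ • (g : ℕ → L) (2 * n - (2 * a + 1))⁆ = 0 := by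
      refine Finset.sum_eq_zero fun a ha => ?_
      have han : a < n := Finset.mem_range.mp ha
      rw [indc_odd_odd ⟨a, by ring⟩ ⟨n - a - 1, by omega⟩, zero_smul]
    rw [hzero, add_zero]
    refine Finset.sum_congr rfl fun a ha => ?_
    have han : a ≤ n := Nat.lt_succ_iff.mp (Finset.mem_range.mp ha)
    rw [indc_even_left, one_smul, smul_smul, lie_smul, smul_lie, smul_smul,
      show 2 * a / 2 = a by omega, show (2 * n - 2 * a) / 2 = n - a by omega,
      choose_coeff han]
  · rw [Nat.odd_iff] at h
    obtain ⟨n, rfl⟩ : ∃ n, q = 2 * n + 1 := ⟨q / 2, by omega⟩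
    have hmod : (2 * n + 1) % 2 = 1 := by omega
    have hdiv : (2 * n + 1) / 2 = n := by omega
    have hbr : ((brBE f g : Pseq L) : ℕ → L) (2 * n + 1)
        = ∑ r ∈ Finset.range (n + 1),
            ((n.choose r : ℚ)) •
              (⁅(f : ℕ → L) (2 * r + 1), (g : ℕ → L) (2 * n + 1 - (2 * r + 1))⁆ +
                ⁅(f : ℕ → L) (2 * r), (g : ℕ → L) (2 * n + 1 - 2 * r)⁆) := by
      show (if (2 * n + 1) % 2 = 0 then _ else _) = _
      rw [if_neg (by omega), hdiv]
    rw [hbr, hdiv, Finset.smul_sum, show 2 * n + 1 + 1 = 2 * n + 2 by ring, sum_split',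
      ← Finset.sum_add_distrib]
    refine Finset.sum_congr rfl fun a ha => ?_
    have han : a ≤ n := Nat.lt_succ_iff.mp (Finset.mem_range.mp ha)
    rw [indc_even_left, one_smul,
      indc_odd_even (by rw [show 2 * n + 1 - (2 * a + 1) = 2 * (n - a) by omega, Nat.odd_iff]; omega),
      one_smul, smul_smul, smul_add, lie_smul, smul_lie, smul_smul, lie_smul, smul_lie, smul_smul,
      show (2 * a + 1) / 2 = a by omega, show 2 * a / 2 = a by omega,
      show (2 * n + 1 - (2 * a + 1)) / 2 = n - a by omega,
      show (2 * n + 1 - 2 * a) / 2 = n - a by omega, choose_coeff han, add_comm]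

end Stmt10Aux


namespace Stmt10Aux

variable {L : Type} [LieRing L] [LieAlgebra ℚ L]

lemma isLie_brCE : IsLieBracketQ (Pseq L) brCE :=
  ⟨brCE_add_left, brCE_smul_left, brCE_add_right, brCE_smul_right, brCE_alternating, brCE_leibniz⟩

lemma phiE_inj : Function.Injective (PhiE (L := L)) := phiE_leftInv.injective

lemma phiE_zero : PhiE (0 : Pseq L) = 0 := by
  refine pseq_ext fun q => ?_
  rw [phiE_coe, coe_zero, smul_zero]

lemma isLie_brBE : IsLieBracketQ (Pseq L) brBE := by
  constructor
  · intro x y z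
    apply phiE_inj
    rw [phiE_add, phiE_br, phiE_br, phiE_br, phiE_add, brCE_add_left]
  · intro c x y
    apply phiE_inj
    rw [phiE_smul, phiE_br, phiE_br, phiE_smul, brCE_smul_left]
  · intro x y z
    apply phiE_inj
    rw [phiE_add, phiE_br, phiE_br, phiE_br, phiE_add, brCE_add_right]
  · intro c x y
    apply phiE_inj
    rw [phiE_smul, phiE_br, phiE_br, phiE_smul, brCE_smul_right]
  · intro x
    apply phiE_inj
    rw [phiE_br, brCE_alternating, phiE_zero]
  · intro x y z
    apply phiE_inj
    rw [phiE_add]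
    simp only [phiE_br]
    rw [brCE_leibniz]

end Stmt10Aux

open Stmt10Aux

/-- On `P = { f : ℕ → L | f(0) = 0 }`, both the even/odd binomial
bracket `[ , ]_b` and the bracket `[f, g]_c(q) = Σ_{r+s=q, r,s not both odd} ⁅f(r), g(s)⁆`
are Lie brackets, and `Φ(f)(2n) = (1/n!) f(2n)`, `Φ(f)(2n+1) = (1/n!) f(2n+1)` is an
isomorphism of Lie algebras from `(P, [ , ]_b)` to `(P, [ , ]_c)` preserving the
filtration `F_r = { f | f(i) = 0 for i < r }`. -/
theorem stmt_10 (L : Type) [LieRing L] [LieAlgebra ℚ L] :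
    -- both brackets are Lie brackets:
    IsLieBracketQ (Pseq L) brBE ∧
    IsLieBracketQ (Pseq L) brCE ∧
    -- `Φ` is linear:
    (∀ f g : Pseq L, PhiE (f + g) = PhiE f + PhiE g) ∧
    (∀ (c : ℚ) (f : Pseq L), PhiE (c • f) = c • PhiE f) ∧
    -- `Φ` is bijective:
    Function.Bijective (PhiE (L := L)) ∧
    -- `Φ` takes `[ , ]_b` to `[ , ]_c`:
    (∀ f g : Pseq L, PhiE (brBE f g) = brCE (PhiE f) (PhiE g)) ∧
    -- `Φ` preserves the filtration `F_r`:
    (∀ (r : ℕ) (f : Pseq L), (∀ i < r, (f : ℕ → L) i = 0) →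
      ∀ i < r, ((PhiE f : Pseq L) : ℕ → L) i = 0) := by
  refine ⟨isLie_brBE, isLie_brCE, phiE_add, phiE_smul, phiE_bij, phiE_br, ?_⟩
  intro r f hf i hi
  rw [phiE_coe, hf i hi, smul_zero]
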